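/- Assume that (F, G) satisfy the WDVV-type equations over ℂ, and let θ ∈ ℂ satisfy θ^r = −1. Define Q ∈ ℂ[t_0,…,t_{r−2}, x] to be the polynomial obtained from ∂G/∂t_{r−1} by substituting t_{r−1} = −rθx. Then for all 0 ≤ α, γ ≤ r−2, the polynomial Σ_{μ=0}^{r−2} (∂³F/∂t_α∂t_γ∂t_μ)·(∂Q/∂t_{r−2−μ}) − (∂Q/∂t_α)·(∂Q/∂t_γ) lies in the ideal of ℂ[t_0,…,t_{r−2}, x] generated by ∂Q/∂x. (This expresses that the Frobenius multiplication defined by F agrees, modulo the Jacobian ideal, with multiplication of values of Q.) -/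

import Mathlib

open scoped BigOperators
open MvPolynomial


section Aux
variable {σ : Type*} [DecidableEq σ]

lemma wdvv_coeff_pderiv (j : σ) (m : σ →₀ ℕ) (P : MvPolynomial σ ℂ) :
    coeff m (pderiv j P) = ((m j : ℂ) + 1) * coeff (m + Finsupp.single j 1) P := by
  induction P using MvPolynomial.induction_on' with
  | monomial s a =>
    rw [pderiv_monomial, coeff_monomial, coeff_monomial]
    by_cases h : s = m + Finsupp.single j 1
    · subst h
      have h1 : m + Finsupp.single j 1 - Finsupp.single j 1 = m :=
        Finsupp.ext fun i => by
          rw [Finsupp.tsub_apply, Finsupp.add_apply]; omega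
      have h2 : (m + Finsupp.single j 1 : σ →₀ ℕ) j = m j + 1 := by
        rw [Finsupp.add_apply, Finsupp.single_apply, if_pos rfl]
      rw [if_pos h1, if_pos rfl, h2]
      push_cast; ring
    · rw [if_neg h]
      by_cases h2 : s - Finsupp.single j 1 = m
      · have hsj : s j = 0 := by
          by_contra hsj
          apply h
          refine Finsupp.ext fun i => ?_
          have hti : (s - Finsupp.single j 1 : σ →₀ ℕ) i = m i :=
            DFunLike.congr_fun h2 i
          rw [Finsupp.tsub_apply] at hti
          rw [Finsupp.add_apply]
          rcases eq_or_ne i j with rfl | hij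
          · rw [Finsupp.single_apply, if_pos rfl] at hti ⊢; omega
          · rw [Finsupp.single_apply, if_neg (Ne.symm hij)] at hti ⊢; omega
        rw [if_pos h2, hsj]
        simp
      · rw [if_neg h2, mul_zero]
  | add p q hp hq =>
    simp [hp, hq, mul_add]

lemma wdvv_vars_pderiv (j i : σ) (P : MvPolynomial σ ℂ) (h : j ∈ (pderiv i P).vars) :
    j ∈ P.vars := by
  rw [mem_vars] at h ⊢
  obtain ⟨d, hd, hjd⟩ := h
  refine ⟨d + Finsupp.single i 1, ?_, ?_⟩
  · rw [mem_support_iff] at hd ⊢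
    intro hc
    apply hd
    rw [wdvv_coeff_pderiv, hc, mul_zero]
  · rw [Finsupp.mem_support_iff] at hjd ⊢
    rw [Finsupp.add_apply]
    omega

lemma wdvv_not_mem_vars (j : σ) (P : MvPolynomial σ ℂ) (h : pderiv j P = 0) :
    j ∉ P.vars := by
  intro hj
  rw [mem_vars] at hj
  obtain ⟨d, hd, hjd⟩ := hj
  rw [Finsupp.mem_support_iff] at hjd
  have key : coeff (d - Finsupp.single j 1) (pderiv j P) ≠ 0 := by
    rw [wdvv_coeff_pderiv]
    have h1 : (d - Finsupp.single j 1) + Finsupp.single j 1 = d :=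
      Finsupp.ext fun i => by
        rw [Finsupp.add_apply, Finsupp.tsub_apply]
        rcases eq_or_ne i j with rfl | hij
        · rw [Finsupp.single_apply, if_pos rfl]; omega
        · rw [Finsupp.single_apply, if_neg (Ne.symm hij)]; omega
    have hdq : (d - Finsupp.single j 1 : σ →₀ ℕ) j = d j - 1 := by
      rw [Finsupp.tsub_apply, Finsupp.single_apply, if_pos rfl]
    have h2 : (((d - Finsupp.single j 1 : σ →₀ ℕ) j : ℕ) : ℂ) + 1 = (d j : ℂ) := by
      rw [hdq]
      have hge : (1:ℕ) ≤ d j := by omega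
      rw [Nat.cast_sub hge]
      push_cast; ring
    rw [h1, h2]
    apply mul_ne_zero
    · exact_mod_cast hjd
    · rwa [← mem_support_iff]
  rw [h] at key
  simp at key

lemma wdvv_aeval_fix {n : ℕ} (j : Fin n) (f : Fin n → MvPolynomial (Fin n) ℂ)
    (hf : ∀ i, i ≠ j → f i = X i) (P : MvPolynomial (Fin n) ℂ) (h : j ∉ P.vars) :
    aeval f P = P := by
  have : (aeval f : MvPolynomial (Fin n) ℂ →ₐ[ℂ] MvPolynomial (Fin n) ℂ).toRingHom P
      = (RingHom.id (MvPolynomial (Fin n) ℂ)) P := by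
    apply hom_congr_vars
    · ext a
      simp [algebraMap_eq]
    · intro i hi _
      have : i ≠ j := fun hc => h (hc ▸ hi)
      simp [hf i this]
    · rfl
  simpa using this

lemma wdvv_pderiv_aeval {n : ℕ} (j : Fin n) (c : ℂ) (i : Fin n)
    (P : MvPolynomial (Fin n) ℂ) :
    pderiv i (aeval (fun k : Fin n => if k = j then C c * X k else X k) P)
      = (if i = j then C c else 1) *
        aeval (fun k : Fin n => if k = j then C c * X k else X k) (pderiv i P) := by
  set f := fun k : Fin n => if k = j then C c * X k else X k with hfdef
  induction P using MvPolynomial.induction_on with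
  | C a => simp
  | add p q hp hq => simp only [map_add, hp, hq, mul_add]
  | mul_X p k hp =>
    have hfk : pderiv i (f k)
        = (if i = j then C c else 1) * aeval f (pderiv i (X k : MvPolynomial (Fin n) ℂ)) := by
      by_cases hk : k = j
      · subst hk
        by_cases hik : i = k
        · subst hik
          simp [hfdef, pderiv_C_mul]
        · simp [hfdef, pderiv_C_mul, pderiv_X_of_ne (Ne.symm hik),
            pderiv_X_of_ne, hik]
      · by_cases hik : i = k
        · subst hik
          simp [hfdef, hk]
        · simp [hfdef, hk, pderiv_X_of_ne (Ne.symm hik)]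
    rw [map_mul, aeval_X, pderiv_mul, hp, hfk, pderiv_mul, map_add, map_mul, map_mul, aeval_X]
    ring
end Aux

/-- suppose `(F, G)` satisfy the WDVV-type equations over `ℂ`, `θ^r = −1`, and
`Q` is obtained from `∂G/∂t_{r−1}` by the substitution `t_{r−1} = −rθx` (the last variable of
the ring `ℂ[t_0,…,t_{r−2},x]` plays the role of `x`).  Then for all `0 ≤ α, γ ≤ r−2` the
polynomial `∑_{μ+ν=r−2} (∂³F/∂t_α∂t_γ∂t_μ)·(∂Q/∂t_ν) − (∂Q/∂t_α)·(∂Q/∂t_γ)` lies in the ideal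
generated by `∂Q/∂x`. -/
theorem multiplication_from_wdvv_type
    (r : ℕ) (hr : 2 ≤ r) (θ : ℂ) (hθ : θ ^ r = -1)
    (F G : MvPolynomial (Fin r) ℂ)
    (hF : pderiv (⟨r - 1, by omega⟩ : Fin r) F = 0)
    (hWDVV : ∀ α γ : Fin r, (α : ℕ) ≤ r - 2 → (γ : ℕ) ≤ r - 2 →
      pderiv α (pderiv (⟨r - 1, by omega⟩ : Fin r) G) *
        pderiv γ (pderiv (⟨r - 1, by omega⟩ : Fin r) G)
      = (∑ μ : Fin r, ∑ ν : Fin r,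
          if (μ : ℕ) + (ν : ℕ) = r - 2 then
            pderiv α (pderiv γ (pderiv μ F)) *
              pderiv ν (pderiv (⟨r - 1, by omega⟩ : Fin r) G)
          else 0)
        + pderiv α (pderiv γ G) *
            pderiv (⟨r - 1, by omega⟩ : Fin r) (pderiv (⟨r - 1, by omega⟩ : Fin r) G))
    (Q : MvPolynomial (Fin r) ℂ)
    (hQ : Q = MvPolynomial.aeval
      (fun i : Fin r =>
        if (i : ℕ) = r - 1 then MvPolynomial.C (-(r : ℂ) * θ) * MvPolynomial.X i
        else MvPolynomial.X i)
      (pderiv (⟨r - 1, by omega⟩ : Fin r) G)) :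
    ∀ α γ : Fin r, (α : ℕ) ≤ r - 2 → (γ : ℕ) ≤ r - 2 →
      (∑ μ : Fin r, ∑ ν : Fin r,
        if (μ : ℕ) + (ν : ℕ) = r - 2 then
          pderiv α (pderiv γ (pderiv μ F)) * pderiv ν Q
        else 0)
      - pderiv α Q * pderiv γ Q
      ∈ Ideal.span {pderiv (⟨r - 1, by omega⟩ : Fin r) Q} := by
  intro α γ hα hγ
  set j : Fin r := ⟨r - 1, by omega⟩ with hj
  set c : ℂ := -(r : ℂ) * θ with hcdef
  have hθ0 : θ ≠ 0 := by
    intro h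
    rw [h, zero_pow (by omega : r ≠ 0)] at hθ
    exact absurd hθ (by norm_num)
  have hc0 : c ≠ 0 := by
    refine mul_ne_zero (neg_ne_zero.mpr ?_) hθ0
    exact_mod_cast (by omega : r ≠ 0)
  set f : Fin r → MvPolynomial (Fin r) ℂ :=
    fun i : Fin r => if (i : ℕ) = r - 1 then C c * X i else X i with hfdef
  have hfeq : f = fun k : Fin r => if k = j then C c * X k else X k := by
    funext k
    by_cases h : (k : ℕ) = r - 1
    · simp only [hfdef]
      rw [if_pos h, if_pos (Fin.ext h)]
    · simp only [hfdef]
      rw [if_neg h, if_neg fun hc => h (by rw [hc])]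
  have hcomm : ∀ (i : Fin r) (P : MvPolynomial (Fin r) ℂ),
      pderiv i (aeval f P) = (if i = j then C c else 1) * aeval f (pderiv i P) := by
    intro i P
    rw [hfeq]
    exact wdvv_pderiv_aeval j c i P
  have hne : ∀ i : Fin r, (i : ℕ) ≤ r - 2 → i ≠ j := by
    intro i hi h
    have := congrArg Fin.val h
    simp only [hj] at this
    omega
  have hQd : ∀ i : Fin r, i ≠ j → pderiv i Q = aeval f (pderiv i (pderiv j G)) := by
    intro i hi
    rw [hQ, hcomm, if_neg hi, one_mul]
  have hQj : pderiv j Q = C c * aeval f (pderiv j (pderiv j G)) := by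
    rw [hQ, hcomm, if_pos rfl]
  have hFvars : j ∉ F.vars := wdvv_not_mem_vars j F hF
  have hFfix : ∀ μ : Fin r,
      aeval f (pderiv α (pderiv γ (pderiv μ F))) = pderiv α (pderiv γ (pderiv μ F)) := by
    intro μ
    refine wdvv_aeval_fix j f (fun i hi => ?_) _
      (fun h => hFvars (wdvv_vars_pderiv _ _ _ (wdvv_vars_pderiv _ _ _ (wdvv_vars_pderiv _ _ _ h))))
    simp only [hfdef]
    exact if_neg fun hc => hi (Fin.ext hc)
  have hW := hWDVV α γ hα hγ
  have hbig : (∑ μ : Fin r, ∑ ν : Fin r,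
        if (μ : ℕ) + (ν : ℕ) = r - 2 then
          pderiv α (pderiv γ (pderiv μ F)) * pderiv ν (pderiv j G)
        else 0)
      = pderiv α (pderiv j G) * pderiv γ (pderiv j G)
        - pderiv α (pderiv γ G) * pderiv j (pderiv j G) :=
    eq_sub_of_add_eq hW.symm
  have hsum : (∑ μ : Fin r, ∑ ν : Fin r,
        if (μ : ℕ) + (ν : ℕ) = r - 2 then
          pderiv α (pderiv γ (pderiv μ F)) * pderiv ν Q
        else 0)
      = aeval f (∑ μ : Fin r, ∑ ν : Fin r,
          if (μ : ℕ) + (ν : ℕ) = r - 2 then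
            pderiv α (pderiv γ (pderiv μ F)) * pderiv ν (pderiv j G)
          else 0) := by
    rw [map_sum]
    refine Finset.sum_congr rfl fun μ _ => ?_
    rw [map_sum]
    refine Finset.sum_congr rfl fun ν _ => ?_
    by_cases hcond : (μ : ℕ) + (ν : ℕ) = r - 2
    · rw [if_pos hcond, if_pos hcond, map_mul, hFfix μ, hQd ν (hne ν (by omega))]
    · rw [if_neg hcond, if_neg hcond, map_zero]
  have hkey : (∑ μ : Fin r, ∑ ν : Fin r,
        if (μ : ℕ) + (ν : ℕ) = r - 2 then
          pderiv α (pderiv γ (pderiv μ F)) * pderiv ν Q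
        else 0)
      - pderiv α Q * pderiv γ Q
      = -(aeval f (pderiv α (pderiv γ G)) * aeval f (pderiv j (pderiv j G))) := by
    rw [hsum, hbig, map_sub, map_mul, map_mul,
      ← hQd α (hne α hα), ← hQd γ (hne γ hγ)]
    ring
  rw [hkey, Ideal.mem_span_singleton]
  refine ⟨-(C c⁻¹ * aeval f (pderiv α (pderiv γ G))), ?_⟩
  rw [hQj]
  have : C c * aeval f (pderiv j (pderiv j G)) * -(C c⁻¹ * aeval f (pderiv α (pderiv γ G)))
      = -((C c * C c⁻¹) *
          (aeval f (pderiv α (pderiv γ G)) * aeval f (pderiv j (pderiv j G)))) := by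
    ring
  rw [this, ← C_mul, mul_inv_cancel₀ hc0, C_1, one_mul]
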